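/- For the 2-component Lotka-Volterra system dx_1/dt = x_1(a_1 x_1 + a_2 x_2), dx_2/dt = x_2(a_3 x_1 + a_4 x_2) on the region x_1, x_2 > 0 with P = (a_3 − a_1)x_1 + (a_4 − a_2)x_2 > 0, the function H = x_1^{a_4(a_3−a_1)} · x_2^{a_1(a_2−a_4)} · P^{a_1 a_4 − a_2 a_3} is a first integral: its Lie derivative along the vector field is zero. -/

import Mathlib

open MvPolynomial

/-- The Lie derivative of a polynomial `P` along the polynomial vector field `f`. -/
noncomputable def lieDeriv {n : ℕ} (f : Fin n → MvPolynomial (Fin n) ℝ)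
    (P : MvPolynomial (Fin n) ℝ) : MvPolynomial (Fin n) ℝ :=
  ∑ i, f i * pderiv i P

/-- `P` is a Darboux polynomial for the vector field `f`. -/
def IsDarboux {n : ℕ} (f : Fin n → MvPolynomial (Fin n) ℝ)
    (P : MvPolynomial (Fin n) ℝ) : Prop :=
  ∃ Ccof : MvPolynomial (Fin n) ℝ, lieDeriv f P = Ccof * P

/-- The Lotka-Volterra vector field `dx_i/dt = x_i (b_i + ∑_j A_{i,j} x_j)`. -/
noncomputable def LV {n : ℕ} (A : Matrix (Fin n) (Fin n) ℝ) (b : Fin n → ℝ) :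
    Fin n → MvPolynomial (Fin n) ℝ :=
  fun i => X i * (C (b i) + ∑ j, C (A i j) * X j)

/-- For the 2-component LV system, the function
`H = x_1^{a_4(a_3-a_1)} x_2^{a_1(a_2-a_4)} P^{a_1 a_4 - a_2 a_3}` with
`P = (a_3-a_1)x_1 + (a_4-a_2)x_2` is a first integral on the region where
`x_1, x_2, P > 0`. -/
theorem twoComponent_first_integral (a1 a2 a3 a4 : ℝ) (x : Fin 2 → ℝ)
    (hx0 : 0 < x 0) (hx1 : 0 < x 1)
    (hP : 0 < (a3 - a1) * x 0 + (a4 - a2) * x 1) :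
    fderiv ℝ
      (fun y : Fin 2 → ℝ =>
        (y 0) ^ (a4 * (a3 - a1)) * (y 1) ^ (a1 * (a2 - a4)) *
          ((a3 - a1) * y 0 + (a4 - a2) * y 1) ^ (a1 * a4 - a2 * a3)) x
      ![x 0 * (a1 * x 0 + a2 * x 1), x 1 * (a3 * x 0 + a4 * x 1)] = 0 := by
  have hproj0 : HasFDerivAt (fun y : Fin 2 → ℝ => y 0)
      (ContinuousLinearMap.proj 0 : (Fin 2 → ℝ) →L[ℝ] ℝ) x :=
    (ContinuousLinearMap.proj 0 : (Fin 2 → ℝ) →L[ℝ] ℝ).hasFDerivAt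
  have hproj1 : HasFDerivAt (fun y : Fin 2 → ℝ => y 1)
      (ContinuousLinearMap.proj 1 : (Fin 2 → ℝ) →L[ℝ] ℝ) x :=
    (ContinuousLinearMap.proj 1 : (Fin 2 → ℝ) →L[ℝ] ℝ).hasFDerivAt
  have hL : HasFDerivAt (fun y : Fin 2 → ℝ => (a3 - a1) * y 0 + (a4 - a2) * y 1)
      ((a3 - a1) • (ContinuousLinearMap.proj 0 : (Fin 2 → ℝ) →L[ℝ] ℝ)
        + (a4 - a2) • (ContinuousLinearMap.proj 1 : (Fin 2 → ℝ) →L[ℝ] ℝ)) x :=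
    (hproj0.const_mul (a3 - a1)).add (hproj1.const_mul (a4 - a2))
  have h0 : HasFDerivAt (fun y : Fin 2 → ℝ => (y 0) ^ (a4 * (a3 - a1)))
      ((a4 * (a3 - a1) * (x 0) ^ (a4 * (a3 - a1) - 1)) •
        (ContinuousLinearMap.proj 0 : (Fin 2 → ℝ) →L[ℝ] ℝ)) x :=
    HasDerivAt.comp_hasFDerivAt (f := fun y : Fin 2 → ℝ => y 0) x (Real.hasDerivAt_rpow_const (Or.inl hx0.ne')) hproj0
  have h1 : HasFDerivAt (fun y : Fin 2 → ℝ => (y 1) ^ (a1 * (a2 - a4)))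
      ((a1 * (a2 - a4) * (x 1) ^ (a1 * (a2 - a4) - 1)) •
        (ContinuousLinearMap.proj 1 : (Fin 2 → ℝ) →L[ℝ] ℝ)) x :=
    HasDerivAt.comp_hasFDerivAt (f := fun y : Fin 2 → ℝ => y 1) x (Real.hasDerivAt_rpow_const (Or.inl hx1.ne')) hproj1
  have h2 : HasFDerivAt
      (fun y : Fin 2 → ℝ => ((a3 - a1) * y 0 + (a4 - a2) * y 1) ^ (a1 * a4 - a2 * a3))
      (((a1 * a4 - a2 * a3) *
          ((a3 - a1) * x 0 + (a4 - a2) * x 1) ^ (a1 * a4 - a2 * a3 - 1)) •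
        ((a3 - a1) • (ContinuousLinearMap.proj 0 : (Fin 2 → ℝ) →L[ℝ] ℝ)
          + (a4 - a2) • (ContinuousLinearMap.proj 1 : (Fin 2 → ℝ) →L[ℝ] ℝ))) x :=
    HasDerivAt.comp_hasFDerivAt (f := fun y : Fin 2 → ℝ => (a3 - a1) * y 0 + (a4 - a2) * y 1) x
      (Real.hasDerivAt_rpow_const (Or.inl hP.ne')) hL
  have hH := (h0.mul h1).mul h2
  rw [HasFDerivAt.fderiv (f := fun y : Fin 2 → ℝ => (y 0) ^ (a4 * (a3 - a1)) * (y 1) ^ (a1 * (a2 - a4)) *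
    ((a3 - a1) * y 0 + (a4 - a2) * y 1) ^ (a1 * a4 - a2 * a3)) hH]
  simp only [ContinuousLinearMap.add_apply, ContinuousLinearMap.smul_apply,
    ContinuousLinearMap.proj_apply, smul_eq_mul, Matrix.cons_val_zero, Matrix.cons_val_one,
    Matrix.head_cons, Pi.mul_apply]
  rw [Real.rpow_sub_one hx0.ne', Real.rpow_sub_one hx1.ne', Real.rpow_sub_one hP.ne']
  field_simp
  ring
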